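/- Any finite simple graph with n vertices has at most √(n+1) · 2^(n/2) cliques or at most √(n+1) · 2^(n/2) cocliques; i.e., the minimum of the number of cliques and the number of cocliques, viewed as a real number, is at most √(n+1) · 2^(n/2). -/

import Mathlib

open Finset

variable {V : Type} [DecidableEq V]

open Classical in
noncomputable def cc (G : SimpleGraph V) (s : Finset V) : ℕ :=
  (s.powerset.filter (fun X : Finset V => G.IsClique (X : Set V))).card

open Classical in
lemma cc_mono (G : SimpleGraph V) {s t : Finset V} (h : s ⊆ t) : cc G s ≤ cc G t :=
  Finset.card_le_card (Finset.filter_subset_filter _ (Finset.powerset_mono.2 h))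

open Classical in
lemma cc_le (G : SimpleGraph V) (s : Finset V) : cc G s ≤ 2 ^ s.card := by
  calc cc G s ≤ s.powerset.card := Finset.card_le_card (Finset.filter_subset _ _)
  _ = 2 ^ s.card := Finset.card_powerset s

open Classical in
lemma cc_insert (G : SimpleGraph V) {v : V} {t N : Finset V} (hv : v ∉ t)
    (hNt : N ⊆ t) (hN : ∀ u ∈ t, (u ∈ N ↔ G.Adj v u)) :
    cc G (insert v t) = cc G t + cc G N := by
  classical
  unfold cc
  have hsplit := Finset.card_filter_add_card_filter_not
    (s := (insert v t).powerset.filter (fun X : Finset V => G.IsClique (X : Set V)))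
    (p := fun X => v ∈ X)
  have h1 : ((insert v t).powerset.filter (fun X : Finset V => G.IsClique (X : Set V))).filter
        (fun X => ¬ v ∈ X)
      = t.powerset.filter (fun X : Finset V => G.IsClique (X : Set V)) := by
    ext X
    simp only [Finset.mem_filter, Finset.mem_powerset]
    constructor
    · rintro ⟨⟨hs, hp⟩, hvX⟩
      refine ⟨fun u hu => ?_, hp⟩
      rcases Finset.mem_insert.1 (hs hu) with h | h
      · exact absurd (h ▸ hu) hvX
      · exact h
    · rintro ⟨hs, hp⟩
      exact ⟨⟨hs.trans (Finset.subset_insert _ _), hp⟩, fun hvX => hv (hs hvX)⟩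
  have h2 : (((insert v t).powerset.filter (fun X : Finset V => G.IsClique (X : Set V))).filter
        (fun X => v ∈ X)).card
      = (N.powerset.filter (fun X : Finset V => G.IsClique (X : Set V))).card := by
    apply Finset.card_bij' (fun X _ => X.erase v) (fun A _ => insert v A)
    · intro X hX
      simp only [Finset.mem_filter] at hX
      exact Finset.insert_erase hX.2
    · intro A hA
      simp only [Finset.mem_filter, Finset.mem_powerset] at hA
      apply Finset.erase_insert
      intro hvA
      exact hv (hNt (hA.1 hvA))
    · intro X hX
      simp only [Finset.mem_filter, Finset.mem_powerset] at hX ⊢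
      obtain ⟨⟨hs, hp⟩, hvX⟩ := hX
      refine ⟨fun u hu => ?_, hp.subset ?_⟩
      · have hne := (Finset.mem_erase.1 hu).1
        have hut := hs (Finset.mem_erase.1 hu).2
        rcases Finset.mem_insert.1 hut with h | h
        · exact absurd h hne
        · exact (hN u h).2 (hp (Finset.mem_coe.2 hvX)
            (Finset.mem_coe.2 (Finset.mem_erase.1 hu).2) (Ne.symm hne))
      · rw [Finset.coe_erase]; exact Set.diff_subset
    · intro A hA
      simp only [Finset.mem_filter, Finset.mem_powerset] at hA ⊢
      obtain ⟨hs, hp⟩ := hA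
      refine ⟨⟨?_, ?_⟩, Finset.mem_insert_self _ _⟩
      · exact Finset.insert_subset_insert v (hs.trans hNt)
      · show G.IsClique ((insert v A : Finset V) : Set V)
        rw [Finset.coe_insert]
        refine hp.insert (fun b hb _ => ?_)
        exact (hN b (hNt (hs hb))).1 (hs hb)
  rw [h1, h2] at hsplit
  omega

open Classical in
lemma key (G : SimpleGraph V) (s : Finset V) :
    cc G s * cc Gᶜ s ≤ (s.card + 1) * 2 ^ s.card := by
  classical
  induction s using Finset.induction_on with
  | empty =>
    have : ∀ H : SimpleGraph V, cc H ∅ = 1 := by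
      intro H
      unfold cc
      rw [Finset.powerset_empty, Finset.filter_singleton]
      simp
    rw [this G, this Gᶜ]
    simp
  | insert v t hv ih =>
    obtain ⟨N, hNt, hN⟩ : ∃ N : Finset V, N ⊆ t ∧ ∀ u ∈ t, (u ∈ N ↔ G.Adj v u) :=
      ⟨t.filter (fun u => G.Adj v u), Finset.filter_subset _ _, by
        intro u hu; simp [Finset.mem_filter, hu]⟩
    obtain ⟨M, hMt, hM⟩ : ∃ M : Finset V, M ⊆ t ∧ ∀ u ∈ t, (u ∈ M ↔ Gᶜ.Adj v u) :=
      ⟨t.filter (fun u => Gᶜ.Adj v u), Finset.filter_subset _ _, by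
        intro u hu; simp [Finset.mem_filter, hu]⟩
    rw [cc_insert G hv hNt hN, cc_insert Gᶜ hv hMt hM,
      Finset.card_insert_of_notMem hv]
    have hcv : cc G N ≤ cc G t := cc_mono G hNt
    have hiv : cc Gᶜ M ≤ cc Gᶜ t := cc_mono Gᶜ hMt
    have hdisj : Disjoint N M := by
      rw [Finset.disjoint_left]
      intro a haN haM
      exact ((hM a (hMt haM)).1 haM).2 ((hN a (hNt haN)).1 haN)
    have hcards : N.card + M.card ≤ t.card := by
      rw [← Finset.card_union_of_disjoint hdisj]
      exact Finset.card_le_card (Finset.union_subset hNt hMt)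
    have hprod : cc G N * cc Gᶜ M ≤ 2 ^ t.card := by
      calc cc G N * cc Gᶜ M ≤ 2 ^ N.card * 2 ^ M.card :=
            Nat.mul_le_mul (cc_le _ _) (cc_le _ _)
        _ = 2 ^ (N.card + M.card) := (pow_add 2 _ _).symm
        _ ≤ 2 ^ t.card := Nat.pow_le_pow_right (by norm_num) hcards
    have hmix : cc G t * cc Gᶜ M + cc G N * cc Gᶜ t ≤ cc G t * cc Gᶜ t + cc G N * cc Gᶜ M := by
      nlinarith
    calc (cc G t + cc G N) * (cc Gᶜ t + cc Gᶜ M)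
        = cc G t * cc Gᶜ t + (cc G t * cc Gᶜ M + cc G N * cc Gᶜ t) + cc G N * cc Gᶜ M := by ring
      _ ≤ 2 * (cc G t * cc Gᶜ t) + 2 * (cc G N * cc Gᶜ M) := by omega
      _ ≤ 2 * ((t.card + 1) * 2 ^ t.card) + 2 * 2 ^ t.card :=
          Nat.add_le_add (Nat.mul_le_mul_left 2 ih) (Nat.mul_le_mul_left 2 hprod)
      _ = (t.card + 1 + 1) * 2 ^ (t.card + 1) := by ring

open Classical in
lemma ncard_clique_set [Fintype V] (G : SimpleGraph V) :
    {X : Set V | G.IsClique X}.ncard = cc G Finset.univ := by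
  classical
  have himg : {X : Set V | G.IsClique X}
      = (fun s : Finset V => (s : Set V)) '' {s : Finset V | G.IsClique (s : Set V)} := by
    ext X
    simp only [Set.mem_image, Set.mem_setOf_eq]
    constructor
    · intro h
      exact ⟨X.toFinset, by simpa using h, X.coe_toFinset⟩
    · rintro ⟨s, hs, rfl⟩; exact hs
  rw [himg, Set.ncard_image_of_injective _ Finset.coe_injective,
    Set.ncard_eq_toFinset_card', Set.toFinset_setOf]
  unfold cc
  rw [Finset.powerset_univ]

theorem min_cliques_cocliques_le {V : Type} [Fintype V] (G : SimpleGraph V) :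
    min ({X : Set V | G.IsClique X}.ncard : ℝ)
        ({Y : Set V | Y.Pairwise fun u v => ¬ G.Adj u v}.ncard : ℝ)
      ≤ Real.sqrt (Fintype.card V + 1) * 2 ^ ((Fintype.card V : ℝ) / 2) := by
  classical
  have hco : {Y : Set V | Y.Pairwise fun u v => ¬ G.Adj u v} = {Y : Set V | Gᶜ.IsClique Y} := by
    ext Y
    simp only [Set.mem_setOf_eq, SimpleGraph.isClique_iff]
    constructor
    · intro h u hu v hv huv
      exact ⟨huv, h hu hv huv⟩
    · intro h u hu v hv huv
      exact (h hu hv huv).2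
  rw [hco, ncard_clique_set G, ncard_clique_set Gᶜ]
  set n := Fintype.card V with hn
  have hkey : cc G Finset.univ * cc Gᶜ Finset.univ ≤ (n + 1) * 2 ^ n := by
    simpa [Finset.card_univ] using key G (Finset.univ : Finset V)
  set a := (cc G Finset.univ : ℝ) with ha
  set b := (cc Gᶜ Finset.univ : ℝ) with hb
  have ha0 : 0 ≤ a := by positivity
  have hb0 : 0 ≤ b := by positivity
  have hab : a * b ≤ ((n : ℝ) + 1) * 2 ^ n := by
    have := hkey
    have : ((cc G Finset.univ * cc Gᶜ Finset.univ : ℕ) : ℝ) ≤ (((n + 1) * 2 ^ n : ℕ) : ℝ) := by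
      exact_mod_cast hkey
    push_cast at this
    linarith
  have hmin2 : (min a b) ^ 2 ≤ a * b := by
    rcases le_total a b with h | h
    · rw [min_eq_left h, sq]
      exact mul_le_mul_of_nonneg_left h ha0
    · rw [min_eq_right h, sq]
      exact mul_le_mul_of_nonneg_right h hb0
  have hmin0 : 0 ≤ min a b := le_min ha0 hb0
  have hsq : min a b ≤ Real.sqrt (((n : ℝ) + 1) * 2 ^ n) :=
    (Real.le_sqrt hmin0 (by positivity)).2 (hmin2.trans hab)
  refine hsq.trans (le_of_eq ?_)
  rw [Real.sqrt_mul (by positivity)]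
  congr 1
  rw [show ((2 : ℝ) ^ n) = (2 : ℝ) ^ (n : ℝ) from (Real.rpow_natCast 2 n).symm,
    Real.sqrt_eq_rpow, ← Real.rpow_mul (by norm_num)]
  ring_nf
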